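/- Consider the nonlinear DAE system Σ and the observer candidate O. For every open interval I, every solution (x,u,y) of Σ on I and every solution ((z,d),(u,y),z) of O on I (with the same u,y), defining e(t) := z(t) − x(t) and φ(t) := f(z(t),u(t),y(t)) − f(x(t),u(t),y(t)), it holds that (e(t), d(t), φ(t)) ∈ V*_{[[ℰ,0],[𝒜,ℬ]]} for all t ∈ I, where V*_{[[ℰ,0],[𝒜,ℬ]]} is the Wong limit of the pencil s[ℰ,0] − [𝒜,ℬ] ∈ ℝ[s]^{(l+p)×(n+k+q_L+q_M)}. -/

import Mathlib

open Matrix Set Filter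

/-- Euclidean norm of a vector in `ℝ^ι`. -/
noncomputable def enorm {ι : Type*} [Fintype ι] (x : ι → ℝ) : ℝ :=
  Real.sqrt (x ⬝ᵥ x)

/-- Spectral (Euclidean operator) norm of a real matrix. -/
noncomputable def matNorm {ι κ : Type*} [Fintype ι] [Fintype κ] [DecidableEq κ]
    (M : Matrix ι κ ℝ) : ℝ :=
  ‖LinearMap.toContinuousLinearMap (Matrix.toEuclideanLin M)‖

/-- Largest eigenvalue of a (symmetric) real matrix, as the supremum of its eigenvalues. -/
noncomputable def lamMax {q : Type*} [Fintype q] (M : Matrix q q ℝ) : ℝ :=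
  sSup {r : ℝ | ∃ v : q → ℝ, v ≠ 0 ∧ M *ᵥ v = r • v}

/-- The first Wong sequence `V^i` of the matrix pencil `sE - A`. -/
def wongV {L N : Type*} [Fintype N] (E A : Matrix L N ℝ) : ℕ → Set (N → ℝ)
  | 0 => Set.univ
  | i + 1 => {x | A *ᵥ x ∈ (fun v => E *ᵥ v) '' wongV E A i}

/-- The first Wong limit `V* = ⋂ V^i` of the matrix pencil `sE - A`. -/
def wongVstar {L N : Type*} [Fintype N] (E A : Matrix L N ℝ) : Set (N → ℝ) :=
  ⋂ i, wongV E A i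

/-- The second Wong sequence `W^i` of the matrix pencil `sE - A`. -/
def wongW {L N : Type*} [Fintype N] (E A : Matrix L N ℝ) : ℕ → Set (N → ℝ)
  | 0 => {0}
  | i + 1 => {x | E *ᵥ x ∈ (fun v => A *ᵥ v) '' wongW E A i}

/-- The second Wong limit `W* = ⋃ W^i` of the matrix pencil `sE - A`. -/
def wongWstar {L N : Type*} [Fintype N] (E A : Matrix L N ℝ) : Set (N → ℝ) :=
  ⋃ i, wongW E A i

/-- `M <_V 0` : the quadratic form of `M` is negative on `V \ {0}`. -/
def NegDefOn {ι : Type*} [Fintype ι] (M : Matrix ι ι ℝ) (V : Set (ι → ℝ)) : Prop :=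
  ∀ v ∈ V, v ≠ 0 → v ⬝ᵥ (M *ᵥ v) < 0

/-- `M >_V 0` : the quadratic form of `M` is positive on `V \ {0}`. -/
def PosDefOn {ι : Type*} [Fintype ι] (M : Matrix ι ι ℝ) (V : Set (ι → ℝ)) : Prop :=
  ∀ v ∈ V, v ≠ 0 → 0 < v ⬝ᵥ (M *ᵥ v)

/-- `M ≥_V 0` : the quadratic form of `M` is nonnegative on `V`. -/
def PosSemidefOn {ι : Type*} [Fintype ι] (M : Matrix ι ι ℝ) (V : Set (ι → ℝ)) : Prop :=
  ∀ v ∈ V, 0 ≤ v ⬝ᵥ (M *ᵥ v)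

/-- Data of the nonlinear DAE system
`d/dt (E x) = A x + B_L f_L(x,u,y) + B_M f_M(J x,u,y)`, `y = C x + h(u)`. -/
structure DAESys (l n m p qL qM : ℕ) where
  E : Matrix (Fin l) (Fin n) ℝ
  A : Matrix (Fin l) (Fin n) ℝ
  BL : Matrix (Fin l) (Fin qL) ℝ
  BM : Matrix (Fin l) (Fin qM) ℝ
  J : Matrix (Fin qM) (Fin n) ℝ
  C : Matrix (Fin p) (Fin n) ℝ
  X : Set (Fin n → ℝ)
  U : Set (Fin m → ℝ)
  Y : Set (Fin p → ℝ)
  h : (Fin m → ℝ) → (Fin p → ℝ)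
  fL : (Fin n → ℝ) → (Fin m → ℝ) → (Fin p → ℝ) → (Fin qL → ℝ)
  fM : (Fin qM → ℝ) → (Fin m → ℝ) → (Fin p → ℝ) → (Fin qM → ℝ)

namespace DAESys

variable {l n m p qL qM k : ℕ}

/-- Standing assumptions: `X`, `U`, `Y` are open, `rk J = qM`, and `f_L`, `f_M`, `h`
are continuous on their domains. -/
def Admissible (S : DAESys l n m p qL qM) : Prop :=
  IsOpen S.X ∧ IsOpen S.U ∧ IsOpen S.Y ∧ S.J.rank = qM ∧
  ContinuousOn (fun w : (Fin n → ℝ) × (Fin m → ℝ) × (Fin p → ℝ) => S.fL w.1 w.2.1 w.2.2)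
    (S.X ×ˢ S.U ×ˢ S.Y) ∧
  ContinuousOn (fun w : (Fin qM → ℝ) × (Fin m → ℝ) × (Fin p → ℝ) => S.fM w.1 w.2.1 w.2.2)
    (((fun v => S.J *ᵥ v) '' S.X) ×ˢ S.U ×ˢ S.Y) ∧
  ContinuousOn S.h S.U

/-- `(x,u,y)`, with `x` of class `C¹` with derivative `x'`, is a solution
of the system on the set `I`. -/
def IsSolutionOn (S : DAESys l n m p qL qM) (I : Set ℝ)
    (x x' : ℝ → Fin n → ℝ) (u : ℝ → Fin m → ℝ) (y : ℝ → Fin p → ℝ) : Prop :=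
  (∀ t ∈ I, x t ∈ S.X ∧ u t ∈ S.U ∧ y t ∈ S.Y) ∧
  ContinuousOn u I ∧ ContinuousOn y I ∧ ContinuousOn x' I ∧
  (∀ t ∈ I, HasDerivWithinAt x (x' t) I t) ∧
  (∀ t ∈ I, S.E *ᵥ x' t =
      S.A *ᵥ x t + S.BL *ᵥ S.fL (x t) (u t) (y t) + S.BM *ᵥ S.fM (S.J *ᵥ x t) (u t) (y t)) ∧
  (∀ t ∈ I, y t = S.C *ᵥ x t + S.h (u t))

/-- `(x,u,y)` is a solution of the system on `I` (for some `C¹`-derivative `x'`). -/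
def IsSol (S : DAESys l n m p qL qM) (I : Set ℝ) (x : ℝ → Fin n → ℝ)
    (u : ℝ → Fin m → ℝ) (y : ℝ → Fin p → ℝ) : Prop :=
  ∃ x', S.IsSolutionOn I x x' u y

/-- `((z,d),(u,y),z)`, with `z` of class `C¹` with derivative `z'`, is a solution of the
observer candidate
`d/dt (E z) = A z + B f(z,u,y) + L₁ d`, `0 = C z - y + h(u) + L₂ d` on the set `I`. -/
def ObsSolOn (S : DAESys l n m p qL qM)
    (L₁ : Matrix (Fin l) (Fin k) ℝ) (L₂ : Matrix (Fin p) (Fin k) ℝ) (I : Set ℝ)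
    (z z' : ℝ → Fin n → ℝ) (d : ℝ → Fin k → ℝ)
    (u : ℝ → Fin m → ℝ) (y : ℝ → Fin p → ℝ) : Prop :=
  (∀ t ∈ I, z t ∈ S.X) ∧
  ContinuousOn z' I ∧ ContinuousOn d I ∧
  (∀ t ∈ I, HasDerivWithinAt z (z' t) I t) ∧
  (∀ t ∈ I, S.E *ᵥ z' t =
      S.A *ᵥ z t + S.BL *ᵥ S.fL (z t) (u t) (y t) + S.BM *ᵥ S.fM (S.J *ᵥ z t) (u t) (y t)
        + L₁ *ᵥ d t) ∧
  (∀ t ∈ I, 0 = S.C *ᵥ z t - y t + S.h (u t) + L₂ *ᵥ d t)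

/-- The observer candidate is an acceptor for the system: every solution of the system
on an open interval admits a corresponding solution of the observer candidate. -/
def IsAcceptor (S : DAESys l n m p qL qM)
    (L₁ : Matrix (Fin l) (Fin k) ℝ) (L₂ : Matrix (Fin p) (Fin k) ℝ) : Prop :=
  ∀ I : Set ℝ, IsOpen I → I.OrdConnected →
    ∀ x u y, S.IsSol I x u y → ∃ z z' d, S.ObsSolOn L₁ L₂ I z z' d u y

/-- The observer candidate is a state estimator for the system: it is an acceptor and for
all solutions of system and observer candidate on `[t₀,∞)` one has `z(t) - x(t) → 0`. -/
def IsStateEstimator (S : DAESys l n m p qL qM)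
    (L₁ : Matrix (Fin l) (Fin k) ℝ) (L₂ : Matrix (Fin p) (Fin k) ℝ) : Prop :=
  S.IsAcceptor L₁ L₂ ∧
  ∀ t₀ : ℝ, ∀ x x' u y z z' d,
    S.IsSolutionOn (Set.Ici t₀) x x' u y →
    S.ObsSolOn L₁ L₂ (Set.Ici t₀) z z' d u y →
    Filter.Tendsto (fun t => z t - x t) Filter.atTop (nhds 0)

/-- The Lipschitz condition on `f_L` with matrix `F`. -/
def LipCond {j : ℕ} (S : DAESys l n m p qL qM) (F : Matrix (Fin j) (Fin n) ℝ) : Prop :=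
  ∀ x ∈ S.X, ∀ z ∈ S.X, ∀ u ∈ S.U, ∀ y ∈ S.Y,
    _root_.enorm (S.fL z u y - S.fL x u y) ≤ _root_.enorm (F *ᵥ (z - x))

/-- The generalized monotonicity condition on `f_M` with matrix `Θ` and constant `μ`. -/
def MonCond (S : DAESys l n m p qL qM) (Θ : Matrix (Fin qM) (Fin qM) ℝ) (μ : ℝ) : Prop :=
  ∀ x ∈ (fun v => S.J *ᵥ v) '' S.X, ∀ z ∈ (fun v => S.J *ᵥ v) '' S.X,
    ∀ u ∈ S.U, ∀ y ∈ S.Y,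
      μ / 2 * ((z - x) ⬝ᵥ (z - x)) ≤ (z - x) ⬝ᵥ (Θ *ᵥ (S.fM z u y - S.fM x u y))

/-- `ℰ = [[E,0],[0,0]]`. -/
def calE (S : DAESys l n m p qL qM) (k : ℕ) :
    Matrix (Fin l ⊕ Fin p) (Fin n ⊕ Fin k) ℝ :=
  Matrix.fromBlocks S.E 0 0 0

/-- `𝒜 = [[A,L₁],[C,L₂]]`. -/
def calA (S : DAESys l n m p qL qM)
    (L₁ : Matrix (Fin l) (Fin k) ℝ) (L₂ : Matrix (Fin p) (Fin k) ℝ) :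
    Matrix (Fin l ⊕ Fin p) (Fin n ⊕ Fin k) ℝ :=
  Matrix.fromBlocks S.A L₁ S.C L₂

/-- `ℬ = [[B_L, B_M],[0,0]]`. -/
def calB (S : DAESys l n m p qL qM) :
    Matrix (Fin l ⊕ Fin p) (Fin qL ⊕ Fin qM) ℝ :=
  Matrix.fromRows (Matrix.fromCols S.BL S.BM) 0

/-- `Â = [[A,0],[C,0]]`. -/
def hatA (S : DAESys l n m p qL qM) (k : ℕ) :
    Matrix (Fin l ⊕ Fin p) (Fin n ⊕ Fin k) ℝ :=
  Matrix.fromBlocks S.A 0 S.C 0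

/-- `H = [[0,0],[0,I_k]]`. -/
def matH (n k : ℕ) : Matrix (Fin n ⊕ Fin k) (Fin n ⊕ Fin k) ℝ :=
  Matrix.fromBlocks 0 0 0 1

/-- `ℱ = [F, 0]`. -/
def calF {j : ℕ} (F : Matrix (Fin j) (Fin n) ℝ) (k : ℕ) :
    Matrix (Fin j) (Fin n ⊕ Fin k) ℝ :=
  Matrix.fromCols F 0

/-- `Θ̂ = [[0, JᵀΘ],[0,0]]`. -/
def hatTheta (S : DAESys l n m p qL qM) (Θ : Matrix (Fin qM) (Fin qM) ℝ) (k : ℕ) :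
    Matrix (Fin n ⊕ Fin k) (Fin qL ⊕ Fin qM) ℝ :=
  Matrix.fromBlocks 0 (S.Jᵀ * Θ) 0 0

/-- `𝒥 = [[JᵀJ,0],[0,0]]`. -/
def calJ (S : DAESys l n m p qL qM) (k : ℕ) :
    Matrix (Fin n ⊕ Fin k) (Fin n ⊕ Fin k) ℝ :=
  Matrix.fromBlocks (S.Jᵀ * S.J) 0 0 0

/-- `Λ_{q_L} = [[I_{q_L},0],[0,0]]`. -/
def lamQL (qL qM : ℕ) : Matrix (Fin qL ⊕ Fin qM) (Fin qL ⊕ Fin qM) ℝ :=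
  Matrix.fromBlocks 1 0 0 0

/-- The matrix `𝒬` of the restricted linear matrix inequality. -/
def calQ {j : ℕ} (S : DAESys l n m p qL qM) (F : Matrix (Fin j) (Fin n) ℝ)
    (Θ : Matrix (Fin qM) (Fin qM) ℝ) (μ δ : ℝ)
    (P : Matrix (Fin l ⊕ Fin p) (Fin n ⊕ Fin k) ℝ)
    (K : Matrix (Fin n ⊕ Fin k) (Fin n ⊕ Fin k) ℝ) :
    Matrix ((Fin n ⊕ Fin k) ⊕ (Fin qL ⊕ Fin qM)) ((Fin n ⊕ Fin k) ⊕ (Fin qL ⊕ Fin qM)) ℝ :=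
  Matrix.fromBlocks
    ((S.hatA k)ᵀ * P + Pᵀ * S.hatA k + (matH n k)ᵀ * Kᵀ + K * matH n k
      + δ • ((calF F k)ᵀ * calF F k) - μ • S.calJ k)
    (Pᵀ * S.calB + S.hatTheta Θ k)
    (S.calBᵀ * P + (S.hatTheta Θ k)ᵀ)
    (-(δ • lamQL qL qM))

/-- The Wong limit `V*` of the augmented pencil `s[ℰ,0] - [𝒜,ℬ]`. -/
def wongAug (S : DAESys l n m p qL qM)
    (L₁ : Matrix (Fin l) (Fin k) ℝ) (L₂ : Matrix (Fin p) (Fin k) ℝ) :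
    Set ((Fin n ⊕ Fin k) ⊕ (Fin qL ⊕ Fin qM) → ℝ) :=
  wongVstar
    (Matrix.fromCols (S.calE k) (0 : Matrix (Fin l ⊕ Fin p) (Fin qL ⊕ Fin qM) ℝ))
    (Matrix.fromCols (S.calA L₁ L₂) S.calB)

/-- The projected Wong limit `V̄* = [I_{n+k}, 0] V*`. -/
def wongAugProj (S : DAESys l n m p qL qM)
    (L₁ : Matrix (Fin l) (Fin k) ℝ) (L₂ : Matrix (Fin p) (Fin k) ℝ) :
    Set (Fin n ⊕ Fin k → ℝ) :=
  (fun (v : (Fin n ⊕ Fin k) ⊕ (Fin qL ⊕ Fin qM) → ℝ) (i : Fin n ⊕ Fin k) => v (Sum.inl i)) ''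
    S.wongAug L₁ L₂

end DAESys


/-- The first Wong sequence as a submodule. -/
def wongVSubmod {L N : Type*} [Fintype N] (E A : Matrix L N ℝ) : ℕ → Submodule ℝ (N → ℝ)
  | 0 => ⊤
  | i + 1 => Submodule.comap (Matrix.mulVecLin A)
      (Submodule.map (Matrix.mulVecLin E) (wongVSubmod E A i))

lemma mem_wongVSubmod_iff {L N : Type*} [Fintype N] (E A : Matrix L N ℝ) :
    ∀ (i : ℕ) (v : N → ℝ), v ∈ wongVSubmod E A i ↔ v ∈ wongV E A i
  | 0, v => by simp [wongVSubmod, wongV]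
  | i + 1, v => by
    simp only [wongVSubmod, wongV, Submodule.mem_comap, Submodule.mem_map,
      Matrix.mulVecLin_apply, Set.mem_setOf_eq, Set.mem_image]
    constructor
    · rintro ⟨w, hw, hwe⟩
      exact ⟨w, (mem_wongVSubmod_iff E A i w).mp hw, hwe⟩
    · rintro ⟨w, hw, hwe⟩
      exact ⟨w, (mem_wongVSubmod_iff E A i w).mpr hw, hwe⟩

open Topology in
lemma sum_elim_add_sum_elim {α β γ : Type*} [Add γ] (a c : α → γ) (b e : β → γ) :
    Sum.elim a b + Sum.elim c e = Sum.elim (a + c) (b + e) := by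
  ext j; cases j <;> rfl

open Topology

/-- For a solution `(x,u,y)` of the system and a solution `((z,d),(u,y),z)` of the observer
candidate on an open interval `I`, the combined trajectory `(e, d, φ)` of error state,
innovations and nonlinearity difference evolves in the Wong limit `V*` of the augmented
pencil `s[ℰ,0] - [𝒜,ℬ]`. -/
theorem error_trajectory_in_wong_limit {l n m p qL qM k : ℕ}
    (S : DAESys l n m p qL qM) (hS : S.Admissible)
    (L₁ : Matrix (Fin l) (Fin k) ℝ) (L₂ : Matrix (Fin p) (Fin k) ℝ)
    (I : Set ℝ) (hIopen : IsOpen I) (hIconn : I.OrdConnected)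
    (x x' : ℝ → Fin n → ℝ) (u : ℝ → Fin m → ℝ) (y : ℝ → Fin p → ℝ)
    (z z' : ℝ → Fin n → ℝ) (d : ℝ → Fin k → ℝ)
    (hx : S.IsSolutionOn I x x' u y)
    (hz : S.ObsSolOn L₁ L₂ I z z' d u y) :
    ∀ t ∈ I,
      Sum.elim (Sum.elim (z t - x t) (d t))
        (Sum.elim (S.fL (z t) (u t) (y t) - S.fL (x t) (u t) (y t))
          (S.fM (S.J *ᵥ z t) (u t) (y t) - S.fM (S.J *ᵥ x t) (u t) (y t)))
      ∈ S.wongAug L₁ L₂ := by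
  classical
  obtain ⟨hx1, hxu, hxy, hx'c, hxd, hxeq, hxout⟩ := hx
  obtain ⟨hz1, hz'c, hdc, hzd, hzeq, hzout⟩ := hz
  set Eaug := Matrix.fromCols (S.calE k)
    (0 : Matrix (Fin l ⊕ Fin p) (Fin qL ⊕ Fin qM) ℝ) with hEaugdef
  set Aaug := Matrix.fromCols (S.calA L₁ L₂) S.calB with hAaugdef
  set W : ℝ → ((Fin n ⊕ Fin k) ⊕ (Fin qL ⊕ Fin qM)) → ℝ := fun t =>
    Sum.elim (Sum.elim (z t - x t) (d t))
      (Sum.elim (S.fL (z t) (u t) (y t) - S.fL (x t) (u t) (y t))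
        (S.fM (S.J *ᵥ z t) (u t) (y t) - S.fM (S.J *ᵥ x t) (u t) (y t))) with hW
  -- action of the augmented `ℰ` on split vectors
  have hEw : ∀ (a : Fin n ⊕ Fin k → ℝ) (b : Fin qL ⊕ Fin qM → ℝ),
      Eaug *ᵥ Sum.elim a b = Sum.elim (S.E *ᵥ (a ∘ Sum.inl)) (0 : Fin p → ℝ) := by
    intro a b
    rw [hEaugdef, Matrix.fromCols_mulVec_sumElim, Matrix.zero_mulVec, add_zero,
      DAESys.calE, Matrix.fromBlocks_mulVec]
    simp [Matrix.zero_mulVec]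
  have hEW : ∀ s, Eaug *ᵥ W s = Sum.elim (S.E *ᵥ (z s - x s)) (0 : Fin p → ℝ) := by
    intro s
    rw [hW]
    rw [hEw]
    congr 1
  -- action of the augmented `𝒜` on the trajectory
  have hAW : ∀ t ∈ I, Aaug *ᵥ W t = Sum.elim (S.E *ᵥ (z' t - x' t)) (0 : Fin p → ℝ) := by
    intro t ht
    rw [hW, hAaugdef, Matrix.fromCols_mulVec_sumElim, DAESys.calA,
      Matrix.fromBlocks_mulVec, DAESys.calB, Matrix.fromRows_mulVec,
      Matrix.fromCols_mulVec_sumElim, Matrix.zero_mulVec]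
    simp only [Sum.elim_comp_inl, Sum.elim_comp_inr]
    rw [sum_elim_add_sum_elim]
    have h1 := hzeq t ht
    have h2 := hxeq t ht
    have h3 := hzout t ht
    have h4 := hxout t ht
    have htop : S.A *ᵥ (z t - x t) + L₁ *ᵥ d t
        + (S.BL *ᵥ (S.fL (z t) (u t) (y t) - S.fL (x t) (u t) (y t))
          + S.BM *ᵥ (S.fM (S.J *ᵥ z t) (u t) (y t) - S.fM (S.J *ᵥ x t) (u t) (y t)))
        = S.E *ᵥ (z' t - x' t) := by
      rw [Matrix.mulVec_sub, Matrix.mulVec_sub, Matrix.mulVec_sub, Matrix.mulVec_sub]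
      linear_combination h2 - h1
    have hbot : S.C *ᵥ (z t - x t) + L₂ *ᵥ d t + 0 = (0 : Fin p → ℝ) := by
      rw [Matrix.mulVec_sub]
      linear_combination h4 - h3
    rw [htop, hbot]
  -- main induction: the trajectory stays in every `V^i`
  suffices H : ∀ (i : ℕ), ∀ t ∈ I, W t ∈ wongV Eaug Aaug i by
    intro t ht
    show W t ∈ S.wongAug L₁ L₂
    rw [DAESys.wongAug, wongVstar, Set.mem_iInter]
    exact fun i => H i t ht
  intro i
  induction i with
  | zero => intro t ht; simp [wongV]
  | succ i ih =>
    intro t ht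
    show Aaug *ᵥ W t ∈ (fun v => Eaug *ᵥ v) '' wongV Eaug Aaug i
    -- the image of `V^i` under `ℰ` is a closed subspace
    set Vi : Submodule ℝ ((Fin l ⊕ Fin p) → ℝ) :=
      Submodule.map (Matrix.mulVecLin Eaug) (wongVSubmod Eaug Aaug i) with hVi
    have hset : ((Vi : Submodule ℝ _) : Set _) = (fun v => Eaug *ᵥ v) '' wongV Eaug Aaug i := by
      rw [hVi, Submodule.map_coe]
      have hfun : ⇑(Matrix.mulVecLin Eaug) = fun v => Eaug *ᵥ v :=
        funext fun v => Matrix.mulVecLin_apply _ _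
      have hcar : ((wongVSubmod Eaug Aaug i : Submodule ℝ _) : Set _) = wongV Eaug Aaug i :=
        Set.ext (mem_wongVSubmod_iff Eaug Aaug i)
      rw [hfun, hcar]
    have hclosed : IsClosed (Vi : Set ((Fin l ⊕ Fin p) → ℝ)) :=
      Vi.closed_of_finiteDimensional
    -- the error has a derivative at `t`
    have hderiv : HasDerivAt (fun s => z s - x s) (z' t - x' t) t :=
      ((hzd t ht).sub (hxd t ht)).hasDerivAt (hIopen.mem_nhds ht)
    have hslope : Tendsto (slope (fun s => z s - x s) t) (𝓝[≠] t)
        (𝓝 (z' t - x' t)) := hasDerivAt_iff_tendsto_slope.mp hderiv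
    -- the relevant filter
    have hfeq : 𝓝[I \ {t}] t = 𝓝[≠] t := by
      rw [Set.diff_eq, Set.inter_comm]
      exact (nhdsWithin_restrict' _ (hIopen.mem_nhds ht)).symm
    haveI : (𝓝[I \ {t}] t).NeBot := by rw [hfeq]; infer_instance
    -- continuous linear map `v ↦ Sum.elim (E *ᵥ v) 0`
    set M2 := Matrix.fromRows S.E (0 : Matrix (Fin p) (Fin n) ℝ) with hM2
    have hT2 : ∀ v, M2 *ᵥ v = Sum.elim (S.E *ᵥ v) (0 : Fin p → ℝ) := by
      intro v; rw [hM2, Matrix.fromRows_mulVec, Matrix.zero_mulVec]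
    have hT2cont : Continuous fun v => M2 *ᵥ v := by
      have := (Matrix.mulVecLin M2).continuous_of_finiteDimensional
      exact this
    -- convergence of the images of difference quotients
    have hcomp : Tendsto (fun s => Sum.elim (S.E *ᵥ slope (fun τ => z τ - x τ) t s)
        (0 : Fin p → ℝ)) (𝓝[I \ {t}] t) (𝓝 (Sum.elim (S.E *ᵥ (z' t - x' t)) 0)) := by
      have h5 : Tendsto (fun s => M2 *ᵥ slope (fun τ => z τ - x τ) t s) (𝓝[≠] t)
          (𝓝 (M2 *ᵥ (z' t - x' t))) := (hT2cont.tendsto _).comp hslope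
      rw [hfeq]
      simpa only [hT2] using h5
    -- each image of a difference quotient lies in `Vi`
    have hmem : ∀ᶠ s in 𝓝[I \ {t}] t,
        Sum.elim (S.E *ᵥ slope (fun τ => z τ - x τ) t s) (0 : Fin p → ℝ)
          ∈ ((Vi : Submodule ℝ _) : Set _) := by
      filter_upwards [self_mem_nhdsWithin] with s hs
      obtain ⟨hsI, -⟩ := hs
      have hq : (s - t)⁻¹ • (W s - W t) ∈ wongVSubmod Eaug Aaug i :=
        Submodule.smul_mem _ _ (Submodule.sub_mem _
          ((mem_wongVSubmod_iff Eaug Aaug i _).mpr (ih s hsI))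
          ((mem_wongVSubmod_iff Eaug Aaug i _).mpr (ih t ht)))
      have hEq : Eaug *ᵥ ((s - t)⁻¹ • (W s - W t))
          = Sum.elim (S.E *ᵥ slope (fun τ => z τ - x τ) t s) (0 : Fin p → ℝ) := by
        rw [slope_def_module, Matrix.mulVec_smul, Matrix.mulVec_sub, hEW, hEW,
          Matrix.mulVec_smul, Matrix.mulVec_sub]
        ext j
        cases j with
        | inl j => simp [Matrix.mulVec_sub]
        | inr j => simp
      rw [← hEq]
      exact Submodule.mem_map_of_mem hq
    have hlim : Sum.elim (S.E *ᵥ (z' t - x' t)) (0 : Fin p → ℝ)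
        ∈ ((Vi : Submodule ℝ _) : Set _) :=
      hclosed.mem_of_tendsto hcomp hmem
    rw [hAW t ht, ← hset]
    exact hlim
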